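/- Let ν be a Borel probability measure on 𝕋 = ℝ/ℤ, z ∈ 𝕋, and ε ∈ (0, 1/4] with ν(B(z, ε)) > 0 and ν{x : dist(x, z) = ε} = 0. For u ∈ ℝ set b_m = log(m · ν(B(z, ε)) / ε) and u_m = u + b_m. Then m · (ν ⊗ θ){(x, ξ) ∈ 𝕋 × [−1,1] : dist(x + εξ, z) < e^{−u_m}} → e^{−u} as m → ∞. Equivalently, with τ = e^{−u}, the sequence u_m satisfies m · ℙ(X_0 > u_m) → τ. -/

import Mathlib

open MeasureTheory Metric Set Filter Topology

noncomputable section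

/-- The uniform (normalized Lebesgue) probability measure on the interval `[-1, 1]`. -/
def unifIcc : Measure ℝ := (2 : ENNReal)⁻¹ • volume.restrict (Set.Icc (-1 : ℝ) 1)

/-- The observable process on the circle:
`X_i(x, ξ̄) = -log dist(T^i x + ε ξ_i, z)`. -/
def X1 (T : AddCircle (1 : ℝ) → AddCircle (1 : ℝ)) (z : AddCircle (1 : ℝ)) (ε : ℝ) (i : ℕ)
    (p : AddCircle (1 : ℝ) × (ℕ → ℝ)) : ℝ :=
  - Real.log (dist (T^[i] p.1 + ((ε * p.2 i : ℝ) : AddCircle (1 : ℝ))) z)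

/-- `Θ` is the infinite product measure `θ^{⊗ℕ}`: every finite-dimensional marginal of `Θ`
is the corresponding finite product of copies of `θ`. -/
def IsIIDProduct1 (θ : Measure ℝ) (Θ : Measure (ℕ → ℝ)) : Prop :=
  ∀ n : ℕ, Θ.map (fun ξ (i : Fin n) => ξ i) = Measure.pi fun _ : Fin n => θ


namespace Stmt5Aux

lemma norm_coe_le_abs (s : ℝ) : ‖(s : AddCircle (1:ℝ))‖ ≤ |s| := by
  rw [AddCircle.norm_eq]
  simpa using (round_le (1⁻¹ * s) 0).trans_eq (by norm_num)

lemma abs_eq_norm_of (s : ℝ) (h1 : |s| ≤ 3/4) (h2 : ‖(s : AddCircle (1:ℝ))‖ < 1/4) :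
    ‖(s : AddCircle (1:ℝ))‖ = |s| := by
  rw [AddCircle.norm_eq] at h2 ⊢
  simp only [inv_one, one_mul, mul_one] at h2 ⊢
  have hr : |(round s : ℝ)| < 1 := by
    have h3 := abs_sub_abs_le_abs_sub ((round s : ℝ)) s
    rw [abs_sub_comm] at h3
    linarith
  have h0 : round s = 0 := by
    have h4 : |round s| < 1 := by exact_mod_cast hr
    have := abs_lt.mp h4
    omega
  rw [h0]; simp

lemma exists_rep (y : AddCircle (1:ℝ)) :
    ∃ b : ℝ, (b : AddCircle (1:ℝ)) = y ∧ |b| ≤ 1/2 ∧ ‖y‖ = |b| := by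
  obtain ⟨c, rfl⟩ := QuotientAddGroup.mk_surjective y
  refine ⟨c - round c, ?_, abs_sub_round c, ?_⟩
  · rw [AddCircle.coe_sub]
    have h0 : ((round c : ℝ) : AddCircle (1:ℝ)) = 0 :=
      (AddCircle.coe_eq_zero_iff (1:ℝ)).mpr ⟨round c, by simp⟩
    rw [h0, sub_zero]
  · rw [AddCircle.norm_eq]; simp

instance : IsProbabilityMeasure unifIcc := by
  constructor
  rw [unifIcc, Measure.smul_apply, Measure.restrict_apply MeasurableSet.univ, Set.univ_inter,
    Real.volume_Icc, smul_eq_mul]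
  rw [show (1:ℝ) - (-1) = 2 by norm_num, ENNReal.ofReal_ofNat,
    ENNReal.inv_mul_cancel (by norm_num) (by norm_num)]

/-- Master formula for the inner measure. -/
lemma unif_eq {ε r : ℝ} (hε0 : 0 < ε) (hε : ε ≤ 1/4) (hr0 : 0 < r) (hr : r ≤ 1/4)
    (x z : AddCircle (1:ℝ)) {b : ℝ} (hb : (b : AddCircle (1:ℝ)) = z - x) (hb2 : |b| ≤ 1/2) :
    unifIcc {ξ : ℝ | dist (x + ((ε * ξ : ℝ) : AddCircle (1:ℝ))) z < r}
      = 2⁻¹ * volume (Ioo ((b-r)/ε) ((b+r)/ε) ∩ Icc (-1:ℝ) 1) := by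
  rw [unifIcc, Measure.smul_apply, Measure.restrict_apply' measurableSet_Icc, smul_eq_mul]
  congr 2
  ext ξ
  simp only [Set.mem_inter_iff, Set.mem_setOf_eq, Set.mem_Icc, Set.mem_Ioo]
  constructor
  · rintro ⟨hd, hξ⟩
    refine ⟨?_, hξ⟩
    have habs : |ε * ξ - b| ≤ 3/4 := by
      have h1 : |ε * ξ| ≤ ε := by
        rw [abs_mul, abs_of_pos hε0]
        have hξ1 : |ξ| ≤ 1 := abs_le.mpr hξ
        nlinarith
      calc |ε * ξ - b| ≤ |ε * ξ| + |b| := abs_sub _ _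
        _ ≤ 3/4 := by linarith
    have hdist : dist (x + ((ε * ξ : ℝ) : AddCircle (1:ℝ))) z = ‖((ε * ξ - b : ℝ) : AddCircle (1:ℝ))‖ := by
      rw [dist_eq_norm, AddCircle.coe_sub, hb]
      congr 1
      abel
    rw [hdist] at hd
    have h5 : ‖((ε * ξ - b : ℝ) : AddCircle (1:ℝ))‖ = |ε * ξ - b| :=
      abs_eq_norm_of _ habs (lt_of_lt_of_le hd hr)
    rw [h5, abs_lt] at hd
    constructor
    · rw [div_lt_iff₀ hε0]; linarith
    · rw [lt_div_iff₀ hε0]; linarith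
  · rintro ⟨⟨h1, h2⟩, hξ⟩
    refine ⟨?_, hξ⟩
    have habs : |ε * ξ - b| < r := by
      rw [abs_lt]
      rw [div_lt_iff₀ hε0] at h1
      rw [lt_div_iff₀ hε0] at h2
      constructor <;> linarith
    have hdist : dist (x + ((ε * ξ : ℝ) : AddCircle (1:ℝ))) z = ‖((ε * ξ - b : ℝ) : AddCircle (1:ℝ))‖ := by
      rw [dist_eq_norm, AddCircle.coe_sub, hb]
      congr 1
      abel
    rw [hdist]
    exact lt_of_le_of_lt (norm_coe_le_abs _) habs

end Stmt5Aux

namespace Stmt5Aux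

lemma two_inv_mul (c : ℝ) (hc : 0 ≤ c) :
    (2:ENNReal)⁻¹ * ENNReal.ofReal (2 * c) = ENNReal.ofReal c := by
  rw [ENNReal.ofReal_mul (by norm_num), ENNReal.ofReal_ofNat, ← mul_assoc,
    ENNReal.inv_mul_cancel (by norm_num) (by norm_num), one_mul]

lemma Ioo_sub : ∀ b r ε : ℝ, 0 < ε → (b+r)/ε - (b-r)/ε = 2 * (r/ε) := by
  intro b r ε hε
  field_simp
  ring

lemma unif_le {ε r : ℝ} (hε0 : 0 < ε) (hε : ε ≤ 1/4) (hr0 : 0 < r) (hr : r ≤ 1/4)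
    (x z : AddCircle (1:ℝ)) :
    unifIcc {ξ : ℝ | dist (x + ((ε * ξ : ℝ) : AddCircle (1:ℝ))) z < r}
      ≤ ENNReal.ofReal (r/ε) := by
  obtain ⟨b, hb, hb2, -⟩ := exists_rep (z - x)
  rw [unif_eq hε0 hε hr0 hr x z hb hb2]
  calc 2⁻¹ * volume (Ioo ((b-r)/ε) ((b+r)/ε) ∩ Icc (-1:ℝ) 1)
      ≤ 2⁻¹ * volume (Ioo ((b-r)/ε) ((b+r)/ε)) := by
        gcongr; exact Set.inter_subset_left
    _ = ENNReal.ofReal (r/ε) := by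
        rw [Real.volume_Ioo, Ioo_sub b r ε hε0, two_inv_mul _ (by positivity)]

lemma unif_ge {ε r : ℝ} (hε0 : 0 < ε) (hε : ε ≤ 1/4) (hr0 : 0 < r) (hr : r ≤ 1/4)
    (x z : AddCircle (1:ℝ)) (hxz : dist x z < ε - r) :
    ENNReal.ofReal (r/ε)
      ≤ unifIcc {ξ : ℝ | dist (x + ((ε * ξ : ℝ) : AddCircle (1:ℝ))) z < r} := by
  obtain ⟨b, hb, hb2, hb3⟩ := exists_rep (z - x)
  have hdxz : dist x z = |b| := by
    rw [dist_eq_norm, ← norm_neg, neg_sub, hb3]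
  rw [hdxz] at hxz
  have habs := abs_lt.mp hxz
  rw [unif_eq hε0 hε hr0 hr x z hb hb2]
  have hsub : Ioo ((b-r)/ε) ((b+r)/ε) ⊆ Icc (-1:ℝ) 1 := by
    apply Set.Ioo_subset_Icc_self.trans
    apply Set.Icc_subset_Icc
    · rw [le_div_iff₀ hε0]; nlinarith
    · rw [div_le_iff₀ hε0]; nlinarith
  rw [Set.inter_eq_left.mpr hsub, Real.volume_Ioo, Ioo_sub b r ε hε0,
    two_inv_mul _ (by positivity)]

lemma unif_zero {ε r : ℝ} (hε0 : 0 < ε) (hε : ε ≤ 1/4) (hr0 : 0 < r) (hr : r ≤ 1/4)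
    (x z : AddCircle (1:ℝ)) (hxz : ε + r < dist x z) :
    unifIcc {ξ : ℝ | dist (x + ((ε * ξ : ℝ) : AddCircle (1:ℝ))) z < r} = 0 := by
  obtain ⟨b, hb, hb2, hb3⟩ := exists_rep (z - x)
  have hdxz : dist x z = |b| := by
    rw [dist_eq_norm, ← norm_neg, neg_sub, hb3]
  rw [hdxz] at hxz
  rw [unif_eq hε0 hε hr0 hr x z hb hb2]
  have hempty : Ioo ((b-r)/ε) ((b+r)/ε) ∩ Icc (-1:ℝ) 1 = ∅ := by
    rw [Set.eq_empty_iff_forall_notMem]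
    rintro ξ ⟨⟨h1, h2⟩, hξ1, hξ2⟩
    rw [div_lt_iff₀ hε0] at h1
    rw [lt_div_iff₀ hε0] at h2
    have h3 : |ε * ξ| ≤ ε := by
      rw [abs_mul, abs_of_pos hε0]
      have : |ξ| ≤ 1 := abs_le.mpr ⟨hξ1, hξ2⟩
      nlinarith
    have := abs_le.mp h3
    rcases abs_lt.mp (show |b| < ε + r by
      cases' abs_cases b with h h <;> rw [h.1] <;> nlinarith) with ⟨-, -⟩
    exact absurd hxz (not_lt.mpr (le_of_lt (by
      cases' abs_cases b with h h <;> rw [h.1] <;> nlinarith)))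
  rw [hempty, measure_empty, mul_zero]

end Stmt5Aux

open Stmt5Aux

/-- On the circle, with `θ` uniform on `[-1,1]`, `ε ∈ (0, 1/4]`,
`ν(B(z,ε)) > 0` and `ν{dist(·,z) = ε} = 0`, setting `b_m = log(m ν(B(z,ε))/ε)` and
`u_m = u + b_m`, one has `m · ℙ(X_0 > u_m) = m·(ν⊗θ){dist(x+εξ, z) < e^{−u_m}} → e^{−u}`. -/
theorem statement_5 (ν : Measure (AddCircle (1 : ℝ))) [IsProbabilityMeasure ν]
    (z : AddCircle (1 : ℝ)) (ε : ℝ) (hε0 : 0 < ε) (hε : ε ≤ 1 / 4)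
    (hpos : 0 < ν (Metric.ball z ε))
    (hbd : ν {x | dist x z = ε} = 0)
    (u : ℝ) :
    Tendsto (fun m : ℕ =>
        (m : ℝ) * ((ν.prod unifIcc) {p : AddCircle (1 : ℝ) × ℝ |
          dist (p.1 + ((ε * p.2 : ℝ) : AddCircle (1 : ℝ))) z <
            Real.exp (-(u + Real.log ((m : ℝ) * (ν (Metric.ball z ε)).toReal / ε)))}).toReal)
      atTop (𝓝 (Real.exp (-u))) := by
  set μ := (ν (Metric.ball z ε)).toReal with hμdef
  have hμ0 : 0 < μ := ENNReal.toReal_pos hpos.ne' (measure_ne_top ν _)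
  set τ := Real.exp (-u) with hτdef
  set r : ℕ → ℝ := fun m => Real.exp (-(u + Real.log ((m : ℝ) * μ / ε))) with hrdef
  set P : ℕ → ENNReal := fun m => (ν.prod unifIcc) {p : AddCircle (1 : ℝ) × ℝ |
      dist (p.1 + ((ε * p.2 : ℝ) : AddCircle (1 : ℝ))) z < r m} with hPdef
  show Tendsto (fun m : ℕ => (m : ℝ) * (P m).toReal) atTop (𝓝 τ)
  -- basic facts about r
  have hrpos : ∀ m, 0 < r m := fun m => Real.exp_pos _
  have hrval : ∀ m : ℕ, 1 ≤ m → r m = τ * ε / ((m : ℝ) * μ) := by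
    intro m hm
    have hm0 : (0:ℝ) < m := by exact_mod_cast hm
    have hc : (0:ℝ) < (m : ℝ) * μ / ε := by positivity
    show Real.exp (-(u + Real.log ((m : ℝ) * μ / ε))) = τ * ε / ((m : ℝ) * μ)
    rw [neg_add, Real.exp_add, Real.exp_neg (Real.log _), Real.exp_log hc, hτdef]
    field_simp
  have hmμ : Tendsto (fun m : ℕ => (m:ℝ) * μ) atTop atTop :=
    (tendsto_natCast_atTop_atTop).atTop_mul_const hμ0
  have hrlim : Tendsto r atTop (𝓝 0) := by
    have h1 : Tendsto (fun m : ℕ => τ * ε / ((m:ℝ) * μ)) atTop (𝓝 0) :=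
      Tendsto.div_atTop tendsto_const_nhds hmμ
    exact h1.congr' (by filter_upwards [eventually_ge_atTop 1] with m hm using (hrval m hm).symm)
  have hrsmall : ∀ᶠ m : ℕ in atTop, r m ≤ 1/4 :=
    hrlim.eventually (eventually_le_nhds (by norm_num : (0:ℝ) < 1/4))
  have hmid : ∀ m : ℕ, 1 ≤ m → (m:ℝ) * (r m / ε) = τ / μ := by
    intro m hm
    have hm0 : (0:ℝ) < m := by exact_mod_cast hm
    rw [hrval m hm]
    field_simp
  -- measurability
  have hmeas : ∀ c : ℝ, MeasurableSet {p : AddCircle (1:ℝ) × ℝ |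
      dist (p.1 + ((ε * p.2 : ℝ) : AddCircle (1:ℝ))) z < c} := by
    intro c
    have h1 : Continuous fun p : AddCircle (1:ℝ) × ℝ =>
        dist (p.1 + ((ε * p.2 : ℝ) : AddCircle (1:ℝ))) z := by
      apply Continuous.dist _ continuous_const
      exact continuous_fst.add
        ((AddCircle.continuous_mk' 1).comp (continuous_const.mul continuous_snd))
    exact (isOpen_lt h1 continuous_const).measurableSet
  have hP : ∀ m, P m = ∫⁻ x, unifIcc {ξ : ℝ |
      dist (x + ((ε * ξ : ℝ) : AddCircle (1:ℝ))) z < r m} ∂ν := by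
    intro m
    have h0 : P m = (ν.prod unifIcc) {p : AddCircle (1 : ℝ) × ℝ |
        dist (p.1 + ((ε * p.2 : ℝ) : AddCircle (1 : ℝ))) z < r m} := rfl
    rw [h0, Measure.prod_apply (hmeas _)]
    rfl
  -- the two bounds on P m
  have hlow : ∀ m, r m ≤ 1/4 →
      ENNReal.ofReal (r m / ε) * ν (ball z (ε - r m)) ≤ P m := by
    intro m hm
    rw [hP m]
    have heq : ENNReal.ofReal (r m / ε) * ν (ball z (ε - r m))
        = ∫⁻ x, (ball z (ε - r m)).indicator (fun _ => ENNReal.ofReal (r m / ε)) x ∂ν := by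
      rw [lintegral_indicator measurableSet_ball, setLIntegral_const]
    rw [heq]
    apply lintegral_mono
    intro x
    by_cases hx : x ∈ ball z (ε - r m)
    · rw [Set.indicator_of_mem hx]
      exact unif_ge hε0 hε (hrpos m) hm x z (mem_ball.mp hx)
    · rw [Set.indicator_of_notMem hx]
      exact zero_le
  have hup : ∀ m, r m ≤ 1/4 →
      P m ≤ ENNReal.ofReal (r m / ε) * ν (closedBall z (ε + r m)) := by
    intro m hm
    rw [hP m]
    have heq : ENNReal.ofReal (r m / ε) * ν (closedBall z (ε + r m))
        = ∫⁻ x, (closedBall z (ε + r m)).indicator (fun _ => ENNReal.ofReal (r m / ε)) x ∂ν := by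
      rw [lintegral_indicator measurableSet_closedBall, setLIntegral_const]
    rw [heq]
    apply lintegral_mono
    intro x
    by_cases hx : x ∈ closedBall z (ε + r m)
    · rw [Set.indicator_of_mem hx]
      exact unif_le hε0 hε (hrpos m) hm x z
    · rw [Set.indicator_of_notMem hx]
      exact (unif_zero hε0 hε (hrpos m) hm x z
        (lt_of_not_ge (fun h => hx (mem_closedBall.mpr h)))).le
  -- measure limits
  have hball : Tendsto (fun m => ν (ball z (ε - r m))) atTop (𝓝 (ν (ball z ε))) := by
    rw [tendsto_order]
    constructor
    · intro a ha
      have hmono : Monotone fun n : ℕ => ball z (ε - ((n:ℝ)+1)⁻¹) := by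
        intro i j hij
        apply ball_subset_ball
        have h2 : ((j:ℝ)+1)⁻¹ ≤ ((i:ℝ)+1)⁻¹ := by
          have hji : (i:ℝ) + 1 ≤ (j:ℝ) + 1 := by
            have : (i:ℝ) ≤ j := Nat.cast_le.mpr hij
            linarith
          exact inv_anti₀ (by positivity) hji
        linarith
      have hiU : (⋃ n : ℕ, ball z (ε - ((n:ℝ)+1)⁻¹)) = ball z ε := by
        ext w
        simp only [mem_iUnion, mem_ball]
        constructor
        · rintro ⟨n, hn⟩
          have : (0:ℝ) < ((n:ℝ)+1)⁻¹ := by positivity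
          linarith
        · intro hw
          obtain ⟨n, hn⟩ := exists_nat_one_div_lt (show 0 < ε - dist w z by linarith)
          refine ⟨n, ?_⟩
          rw [one_div] at hn
          linarith
      have hsup := hmono.measure_iUnion (μ := ν)
      rw [hiU] at hsup
      rw [hsup] at ha
      obtain ⟨n, hn⟩ := lt_iSup_iff.mp ha
      have hev : ∀ᶠ m : ℕ in atTop, r m < ((n:ℝ)+1)⁻¹ :=
        hrlim.eventually (eventually_lt_nhds (by positivity))
      filter_upwards [hev] with m hm
      exact hn.trans_le (measure_mono (ball_subset_ball (by linarith)))
    · intro a ha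
      filter_upwards with m
      exact lt_of_le_of_lt
        (measure_mono (ball_subset_ball (by linarith [hrpos m]))) ha
  have hceq : ν (closedBall z ε) = ν (ball z ε) := by
    apply le_antisymm
    · calc ν (closedBall z ε) ≤ ν (ball z ε ∪ {x | dist x z = ε}) := by
            apply measure_mono
            intro w hw
            rcases lt_or_eq_of_le (mem_closedBall.mp hw) with h | h
            · exact Or.inl h
            · exact Or.inr h
        _ ≤ ν (ball z ε) + ν {x | dist x z = ε} := measure_union_le _ _
        _ = ν (ball z ε) := by rw [hbd, add_zero]
    · exact measure_mono ball_subset_closedBall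
  have hcball : Tendsto (fun m => ν (closedBall z (ε + r m))) atTop (𝓝 (ν (ball z ε))) := by
    have hIc : (⋂ t > ε, closedBall z t) = closedBall z ε := by
      apply subset_antisymm
      · intro w hw
        simp only [mem_iInter, mem_closedBall] at hw ⊢
        by_contra h
        push_neg at h
        have := hw ((ε + dist w z)/2) (by linarith)
        linarith
      · intro w hw
        simp only [mem_iInter, mem_closedBall] at hw ⊢
        intro t ht
        exact hw.trans ht.le
    have H := tendsto_measure_biInter_gt (μ := ν) (s := fun t : ℝ => closedBall z t) (a := ε)
      (fun t _ => measurableSet_closedBall.nullMeasurableSet)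
      (fun i j _ hij => closedBall_subset_closedBall hij)
      ⟨ε+1, by linarith, measure_ne_top ν _⟩
    rw [hIc, hceq] at H
    have hcomp : Tendsto (fun m : ℕ => ε + r m) atTop (𝓝[>] ε) := by
      apply tendsto_nhdsWithin_of_tendsto_nhds_of_eventually_within
      · simpa using tendsto_const_nhds.add hrlim
      · filter_upwards with m
        simp only [mem_Ioi]
        linarith [hrpos m]
    exact H.comp hcomp
  -- real-valued limits
  have hPfin : ∀ m, P m ≠ ⊤ := fun m => measure_ne_top _ _
  have hlowR : Tendsto (fun m : ℕ => (τ/μ) * (ν (ball z (ε - r m))).toReal)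
      atTop (𝓝 τ) := by
    have h1 := (ENNReal.tendsto_toReal (measure_ne_top ν (ball z ε))).comp hball
    have h2 := h1.const_mul (τ/μ)
    have h3 : (τ/μ) * (ν (ball z ε)).toReal = τ := by
      rw [← hμdef]
      exact div_mul_cancel₀ τ hμ0.ne'
    rw [h3] at h2
    exact h2
  have hupR : Tendsto (fun m : ℕ => (τ/μ) * (ν (closedBall z (ε + r m))).toReal)
      atTop (𝓝 τ) := by
    have h1 := (ENNReal.tendsto_toReal (measure_ne_top ν (ball z ε))).comp hcball
    have h2 := h1.const_mul (τ/μ)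
    have h3 : (τ/μ) * (ν (ball z ε)).toReal = τ := by
      rw [← hμdef]
      exact div_mul_cancel₀ τ hμ0.ne'
    rw [h3] at h2
    exact h2
  -- sandwich
  have hlb : ∀ᶠ m : ℕ in atTop,
      (τ/μ) * (ν (ball z (ε - r m))).toReal ≤ (m:ℝ) * (P m).toReal := by
    filter_upwards [eventually_ge_atTop 1, hrsmall] with m hm1 hm4
    have h := hlow m hm4
    have hfin : ENNReal.ofReal (r m / ε) * ν (ball z (ε - r m)) ≠ ⊤ :=
      ENNReal.mul_ne_top ENNReal.ofReal_ne_top (measure_ne_top _ _)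
    have h2 := (ENNReal.toReal_le_toReal hfin (hPfin m)).mpr h
    rw [ENNReal.toReal_mul, ENNReal.toReal_ofReal (by positivity)] at h2
    calc (τ/μ) * (ν (ball z (ε - r m))).toReal
        = (m:ℝ) * (r m / ε) * (ν (ball z (ε - r m))).toReal := by rw [hmid m hm1]
      _ = (m:ℝ) * (r m / ε * (ν (ball z (ε - r m))).toReal) := by ring
      _ ≤ (m:ℝ) * (P m).toReal := by
          apply mul_le_mul_of_nonneg_left h2 (by positivity)
  have hub : ∀ᶠ m : ℕ in atTop,
      (m:ℝ) * (P m).toReal ≤ (τ/μ) * (ν (closedBall z (ε + r m))).toReal := by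
    filter_upwards [eventually_ge_atTop 1, hrsmall] with m hm1 hm4
    have h := hup m hm4
    have hfin : ENNReal.ofReal (r m / ε) * ν (closedBall z (ε + r m)) ≠ ⊤ :=
      ENNReal.mul_ne_top ENNReal.ofReal_ne_top (measure_ne_top _ _)
    have h2 := (ENNReal.toReal_le_toReal (hPfin m) hfin).mpr h
    rw [ENNReal.toReal_mul, ENNReal.toReal_ofReal (by positivity)] at h2
    calc (m:ℝ) * (P m).toReal
        ≤ (m:ℝ) * (r m / ε * (ν (closedBall z (ε + r m))).toReal) := by
          apply mul_le_mul_of_nonneg_left h2 (by positivity)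
      _ = (m:ℝ) * (r m / ε) * (ν (closedBall z (ε + r m))).toReal := by ring
      _ = (τ/μ) * (ν (closedBall z (ε + r m))).toReal := by rw [hmid m hm1]
  exact tendsto_of_tendsto_of_tendsto_of_le_of_le' hlowR hupR hlb hub
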